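/- arXiv:1701.04395 — 2 statements merged into one kernel-verified Lean document; each statement's English description precedes it below -/
import Mathlib

section
/- Let m > 0, h ∈ ℝ³, Σ ∈ 𝕊³ with the pseudo-inertia J = [[Σ, h],[hᵀ, m]] positive definite. Then there exists a finitely supported positive measure on ℝ³ (a finite set of point masses with positive weights) whose total mass is m, first moment is h, and second moment matrix is Σ. -/
open Matrix

/-- A positive-definite pseudo-inertia matrix is realizable by finitely many point
    masses with positive weights. -/
theorem posDef_pseudoInertia_realizable_by_point_masses (m : ℝ) (h : Fin 3 → ℝ)
    (Sig : Matrix (Fin 3) (Fin 3) ℝ) (hS : Sig.IsSymm) (hm : 0 < m)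
    (hJ : (Matrix.fromBlocks Sig (Matrix.replicateCol (Fin 1) h) (Matrix.replicateRow (Fin 1) h)
        (Matrix.of fun _ _ => m)).PosDef) :
    ∃ (n : ℕ) (w : Fin n → ℝ) (p : Fin n → Fin 3 → ℝ),
      (∀ k, 0 < w k) ∧ (∑ k, w k = m) ∧
      (∀ i, ∑ k, w k * p k i = h i) ∧
      (∀ i j, ∑ k, w k * p k i * p k j = Sig i j) := by
  have hm' : m ≠ 0 := ne_of_gt hm
  set D : Matrix (Fin 1) (Fin 1) ℝ := Matrix.of fun _ _ => m with hDdef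
  have hDdiag : D = diagonal (fun _ => m) := by
    ext i j; fin_cases i; fin_cases j; simp [hDdef]
  have hD : D.PosDef := by rw [hDdiag]; exact (posDef_diagonal_iff).mpr (fun _ => hm)
  haveI : Invertible D := hD.isUnit.invertible
  have hrow : Matrix.replicateRow (Fin 1) h = (Matrix.replicateCol (Fin 1) h)ᴴ := by
    rw [conjTranspose_replicateCol]; simp
  have hPS : (Sig - Matrix.replicateCol (Fin 1) h * D⁻¹ * (Matrix.replicateCol (Fin 1) h)ᴴ).PosSemidef := by
    rw [← Matrix.PosDef.fromBlocks₂₂ Sig (Matrix.replicateCol (Fin 1) h) hD, ← hrow]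
    exact hJ.posSemidef
  obtain ⟨A, hCA⟩ : ∃ B : Matrix (Fin 3) (Fin 3) ℝ, (Sig - Matrix.replicateCol (Fin 1) h * D⁻¹ * (Matrix.replicateCol (Fin 1) h)ᴴ) = Bᴴ * B := by
    open scoped MatrixOrder in exact CStarAlgebra.nonneg_iff_eq_star_mul_self.mp hPS.nonneg
  have hDinv : D⁻¹ = diagonal (fun _ => m⁻¹) := by
    refine Matrix.inv_eq_right_inv ?_
    ext i j; fin_cases i; fin_cases j
    simp [hDdef, mul_apply, hm']
  have hA : ∀ i j, A 0 i * A 0 j + A 1 i * A 1 j + A 2 i * A 2 j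
      = Sig i j - h i * h j / m := by
    intro i j
    have := congrFun (congrFun hCA.symm i) j
    rw [conjTranspose_eq_transpose_of_trivial] at this
    simpa [mul_apply, Fin.sum_univ_three, Fin.sum_univ_one, hDinv, diagonal,
      Matrix.sub_apply, div_eq_mul_inv, mul_comm, mul_assoc, mul_left_comm] using this
  have hr2 : Real.sqrt (3 / m) * Real.sqrt (3 / m) = 3 / m :=
    Real.mul_self_sqrt (by positivity)
  have hmm : m * m⁻¹ = 1 := mul_inv_cancel₀ hm'
  set r := Real.sqrt (3 / m) with hr
  have e5s : (![1,1,1,-1,-1,-1] : Fin 6 → ℝ) 5 = -1 := rfl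
  have e5i : (![0,1,2,0,1,2] : Fin 6 → Fin 3) 5 = 2 := rfl
  refine ⟨6, fun _ => m / 6, fun k j => h j / m + (![1,1,1,-1,-1,-1] : Fin 6 → ℝ) k *
      r * A ((![0,1,2,0,1,2] : Fin 6 → Fin 3) k) j, fun k => by positivity, ?_, ?_, ?_⟩
  · simp [Fin.sum_univ_six]; ring
  · intro i
    simp only [Fin.sum_univ_six, Matrix.cons_val_zero, Matrix.cons_val_one, Matrix.head_cons,
      Matrix.cons_val_two, Matrix.tail_cons, Matrix.cons_val_three, Matrix.cons_val_four,
      Matrix.cons_val_succ, Matrix.cons_val_fin_one, e5s, e5i]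
    linear_combination (h i) * hmm
  · intro i j
    simp only [Fin.sum_univ_six, Matrix.cons_val_zero, Matrix.cons_val_one, Matrix.head_cons,
      Matrix.cons_val_two, Matrix.tail_cons, Matrix.cons_val_three, Matrix.cons_val_four,
      Matrix.cons_val_succ, Matrix.cons_val_fin_one, e5s, e5i]
    linear_combination (m / 3 * (A 0 i * A 0 j + A 1 i * A 1 j + A 2 i * A 2 j)) * hr2 +
      (m * m⁻¹) * hA i j + (Sig i j) * hmm
end

section
/- Let S = {x ∈ ℝ³ : (x−x_s)ᵀ Q_s⁻¹ (x−x_s) ≤ 1} be an ellipsoid with Q_s positive definite, and let m > 0, h ∈ ℝ³ with c = h/m. Then c ∈ S if and only if the 4×4 matrix C = [[m, hᵀ − m·x_sᵀ],[h − m·x_s, m·Q_s]] is positive semidefinite. -/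
open Matrix

lemma posSemidef_fin_one_iff {M : Matrix (Fin 1) (Fin 1) ℝ} :
    M.PosSemidef ↔ 0 ≤ M 0 0 := by
  constructor
  · intro hM
    have := (posSemidef_iff_dotProduct_mulVec.mp hM).2 (fun _ => 1)
    simpa [dotProduct, Matrix.mulVec, Fin.sum_univ_one] using this
  · intro hM
    refine posSemidef_iff_dotProduct_mulVec.mpr ⟨?_, ?_⟩
    · ext i j
      fin_cases i; fin_cases j
      simp [Matrix.conjTranspose_apply]
    · intro x
      have : star x ⬝ᵥ M *ᵥ x = M 0 0 * (x 0 * x 0) := by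
        simp [dotProduct, Matrix.mulVec, Fin.sum_univ_one]
        ring
      rw [this]
      exact mul_nonneg hM (mul_self_nonneg _)

/-- CoM-in-ellipsoid constraint as an LMI: c ∈ S iff
    C = [[m, hᵀ − m·x_sᵀ],[h − m·x_s, m·Q_s]] ⪰ 0. -/
theorem com_in_ellipsoid_iff_lmi (Qs : Matrix (Fin 3) (Fin 3) ℝ) (hQs : Qs.PosDef)
    (xs : Fin 3 → ℝ) (m : ℝ) (hm : 0 < m) (h c : Fin 3 → ℝ) (hc : c = m⁻¹ • h) :
    (c - xs) ⬝ᵥ (Qs⁻¹ *ᵥ (c - xs)) ≤ 1 ↔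
      (Matrix.fromBlocks (Matrix.of fun _ _ => m) (Matrix.replicateRow (Fin 1) (h - m • xs))
        (Matrix.replicateCol (Fin 1) (h - m • xs)) (m • Qs)).PosSemidef := by
  have hh : h = m • c := by
    rw [hc]; ext i; simp [smul_smul, mul_inv_cancel₀ hm.ne', ← mul_assoc]
  have hv : h - m • xs = m • (c - xs) := by rw [hh, smul_sub]
  -- m • Qs is positive definite
  have hD : (m • Qs).PosDef := by
    refine posDef_iff_dotProduct_mulVec.mpr ⟨?_, ?_⟩
    · have h1 := hQs.1
      unfold Matrix.IsHermitian at h1 ⊢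
      rw [Matrix.conjTranspose_smul, h1]
      simp
    · intro x hx
      have := (posDef_iff_dotProduct_mulVec.mp hQs).2 hx
      simp only [smul_mulVec, dotProduct_smul, smul_eq_mul]
      exact mul_pos hm this
  haveI := hD.isUnit.invertible
  haveI : Invertible m := invertibleOfNonzero hm.ne'
  have hcol : Matrix.replicateCol (Fin 1) (h - m • xs) = (Matrix.replicateRow (Fin 1) (h - m • xs))ᴴ := by
    rw [Matrix.conjTranspose_replicateRow]; simp
  rw [hcol, Matrix.PosDef.fromBlocks₂₂ _ _ hD, posSemidef_fin_one_iff]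
  have hinv : (m • Qs)⁻¹ = m⁻¹ • Qs⁻¹ := by
    have := Matrix.inv_smul (A := Qs) m ((Matrix.isUnit_iff_isUnit_det _).mp hQs.isUnit)
    rwa [invOf_eq_inv] at this
  have hentry :
      ((Matrix.of fun _ _ => m : Matrix (Fin 1) (Fin 1) ℝ) -
        Matrix.replicateRow (Fin 1) (h - m • xs) * (m • Qs)⁻¹ * (Matrix.replicateRow (Fin 1) (h - m • xs))ᴴ) 0 0
      = m * (1 - (c - xs) ⬝ᵥ (Qs⁻¹ *ᵥ (c - xs))) := by
    have hrw : Matrix.replicateRow (Fin 1) (h - m • xs) * (m • Qs)⁻¹ *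
        (Matrix.replicateRow (Fin 1) (h - m • xs))ᴴ
        = Matrix.of fun (_ _ : Fin 1) =>
            (h - m • xs) ⬝ᵥ ((m • Qs)⁻¹ *ᵥ (h - m • xs)) := by
      rw [Matrix.conjTranspose_replicateRow, star_trivial, Matrix.mul_assoc, ← Matrix.replicateCol_mulVec,
        Matrix.replicateRow_mul_replicateCol]
    rw [hrw]
    simp only [Matrix.sub_apply, Matrix.of_apply]
    rw [hinv, hv, smul_dotProduct, Matrix.mulVec_smul, Matrix.smul_mulVec,
      dotProduct_smul, dotProduct_smul]
    simp only [smul_eq_mul]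
    field_simp
  rw [hentry]
  rw [mul_nonneg_iff_of_pos_left hm, sub_nonneg]
end
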